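/- arXiv:1001.2102 — 2 statements merged into one kernel-verified Lean document; each statement's English description precedes it below -/
import Mathlib

section
/- Wu's lemma: Let Θ ⊆ ℝ^p, θ_0 ∈ Θ, and let S_n : Θ → ℝ be random functions with minimizers θ̂_n = argmin_{θ∈Θ} S_n(θ). If for every sufficiently small δ > 0, almost surely liminf_n inf_{θ ∈ Θ, ‖θ−θ_0‖ ≥ δ} (S_n(θ) − S_n(θ_0)) > 0, then θ̂_n → θ_0 almost surely. -/
open MeasureTheory Filter

/-- Wu's lemma: if for every sufficiently small `δ > 0`, almost surely
`liminf_n inf_{θ ∈ Θ, ‖θ - θ0‖ ≥ δ} (S n θ - S n θ0) > 0`, then the minimizers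
`θhat n` converge almost surely to `θ0`. -/
theorem stmt_3 {Ω : Type*} [MeasurableSpace Ω] (μ : Measure Ω) [IsProbabilityMeasure μ]
    {p : ℕ} (Θ : Set (EuclideanSpace ℝ (Fin p))) (θ0 : EuclideanSpace ℝ (Fin p))
    (hθ0 : θ0 ∈ Θ)
    (S : ℕ → Ω → EuclideanSpace ℝ (Fin p) → ℝ)
    (θhat : ℕ → Ω → EuclideanSpace ℝ (Fin p))
    (hmin : ∀ n ω, θhat n ω ∈ Θ ∧ ∀ θ ∈ Θ, S n ω (θhat n ω) ≤ S n ω θ)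
    (h : ∃ δ0 > (0:ℝ), ∀ δ : ℝ, 0 < δ → δ ≤ δ0 →
      ∀ᵐ ω ∂μ, 0 < atTop.liminf (fun n =>
        sInf ((fun θ => S n ω θ - S n ω θ0) '' {θ | θ ∈ Θ ∧ δ ≤ dist θ θ0}))) :
    ∀ᵐ ω ∂μ, Tendsto (fun n => θhat n ω) atTop (nhds θ0) := by
  obtain ⟨δ0, hδ0, h⟩ := h
  have key : ∀ k : ℕ, ∀ᵐ ω ∂μ,
      ∀ᶠ n in atTop, dist (θhat n ω) θ0 < min δ0 (1 / (k + 1)) := by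
    intro k
    have hk : (0:ℝ) < min δ0 (1 / (k + 1)) := lt_min hδ0 (by positivity)
    filter_upwards [h _ hk (min_le_left _ _)] with ω hω
    rw [Filter.liminf_eq] at hω
    set f : ℕ → ℝ := fun n =>
      sInf ((fun θ => S n ω θ - S n ω θ0) ''
        {θ | θ ∈ Θ ∧ min δ0 (1 / (k + 1)) ≤ dist θ θ0}) with hf
    have hex : ∃ a, (∀ᶠ n in atTop, a ≤ f n) ∧ 0 < a := by
      by_contra hc
      push_neg at hc
      have : sSup {a : ℝ | ∀ᶠ n in atTop, a ≤ f n} ≤ 0 :=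
        Real.sSup_le (fun x hx => hc x hx) le_rfl
      exact absurd this (not_le.mpr hω)
    obtain ⟨a, ha, hapos⟩ := hex
    filter_upwards [ha] with n hn
    by_contra hlt
    push_neg at hlt
    have hmem : S n ω (θhat n ω) - S n ω θ0 ∈
        ((fun θ => S n ω θ - S n ω θ0) ''
          {θ | θ ∈ Θ ∧ min δ0 (1 / (k + 1)) ≤ dist θ θ0}) :=
      ⟨θhat n ω, ⟨(hmin n ω).1, hlt⟩, rfl⟩
    have hle : S n ω (θhat n ω) - S n ω θ0 ≤ 0 :=
      sub_nonpos.mpr ((hmin n ω).2 θ0 hθ0)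
    have hfn : f n ≤ 0 := by
      by_cases hb : BddBelow ((fun θ => S n ω θ - S n ω θ0) ''
          {θ | θ ∈ Θ ∧ min δ0 (1 / (k + 1)) ≤ dist θ θ0})
      · exact le_trans (csInf_le hb hmem) hle
      · exact (Real.sInf_of_not_bddBelow hb).le
    linarith
  rw [← ae_all_iff] at key
  filter_upwards [key] with ω hω
  rw [Metric.tendsto_atTop]
  intro ε hε
  obtain ⟨k, hk⟩ := exists_nat_one_div_lt hε
  obtain ⟨N, hN⟩ := eventually_atTop.mp (hω k)
  exact ⟨N, fun n hn => lt_of_lt_of_le (hN n hn) (min_le_right _ _) |>.trans hk⟩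
end

section
/- Toeplitz-type consistency for the Harris estimator: suppose m_0 > 1 and N_n m_0^{−n} → W a.s. with W > 0 on an event Ω_∞. Then on Ω_∞, m̂_n = (∑_{k=1}^n N_k)/(∑_{k=1}^n N_{k−1}) → m_0 almost surely. -/
open MeasureTheory Filter

lemma toeplitz_geom {r : ℝ} (hr : 1 < r) {c : ℕ → ℝ} {L : ℝ}
    (hc : Tendsto c atTop (nhds L)) :
    Tendsto (fun n => (∑ i ∈ Finset.range n, c i * r ^ i) / r ^ n) atTop
      (nhds (L / (r - 1))) := by
  have hr0 : (0 : ℝ) < r := lt_trans one_pos hr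
  have hrne : ∀ i : ℕ, (r : ℝ) ^ i ≠ 0 := fun i => (pow_pos hr0 i).ne'
  have hr1 : r - 1 ≠ 0 := by linarith
  -- geometric sums tend to infinity
  have hgeom : ∀ n : ℕ, ∑ i ∈ Finset.range n, r ^ i = (r ^ n - 1) / (r - 1) := by
    intro n; rw [geom_sum_eq (by linarith : r ≠ 1)]
  have hpow : Tendsto (fun n : ℕ => r ^ n) atTop atTop :=
    tendsto_pow_atTop_atTop_of_one_lt hr
  have hG : Tendsto (fun n : ℕ => ∑ i ∈ Finset.range n, r ^ i) atTop atTop := by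
    simp only [hgeom]
    exact (tendsto_atTop_add_const_right atTop (-1) hpow |>.congr
      (fun n => by ring_nf)).atTop_div_const (by linarith)
  -- o-estimate
  have hlittle : (fun i => (c i - L) * r ^ i) =o[atTop] (fun i : ℕ => r ^ i) := by
    rw [Asymptotics.isLittleO_iff_tendsto (fun i h => absurd h (hrne i))]
    have : Tendsto (fun i => c i - L) atTop (nhds 0) :=
      tendsto_sub_nhds_zero_iff.2 hc
    exact this.congr fun i => by field_simp
  have hsum := hlittle.sum_range (fun i => (pow_pos hr0 i).le) hG
  have h0 : Tendsto (fun n => (∑ i ∈ Finset.range n, (c i - L) * r ^ i)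
      / ∑ i ∈ Finset.range n, r ^ i) atTop (nhds 0) :=
    hsum.tendsto_div_nhds_zero
  -- G n > 0 for n ≥ 1
  have hGpos : ∀ n : ℕ, 1 ≤ n → 0 < ∑ i ∈ Finset.range n, r ^ i := by
    intro n hn
    apply Finset.sum_pos (fun i _ => pow_pos hr0 i)
    exact Finset.nonempty_range_iff.2 (by omega)
  -- weighted average → L
  have havg : Tendsto (fun n => (∑ i ∈ Finset.range n, c i * r ^ i)
      / ∑ i ∈ Finset.range n, r ^ i) atTop (nhds L) := by
    have := h0.add (tendsto_const_nhds (x := L))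
    rw [zero_add] at this
    apply this.congr'
    filter_upwards [Ici_mem_atTop 1] with n hn
    have hGn := (hGpos n hn).ne'
    field_simp
    simp only [sub_mul, Finset.sum_sub_distrib, Finset.mul_sum]
    ring
  -- G n / r ^ n → 1/(r-1)
  have hratio : Tendsto (fun n : ℕ => (∑ i ∈ Finset.range n, r ^ i) / r ^ n) atTop
      (nhds (1 / (r - 1))) := by
    have h1 : Tendsto (fun n : ℕ => (1 : ℝ) / r ^ n) atTop (nhds 0) := by
      simp only [one_div, ← inv_pow]
      exact tendsto_pow_atTop_nhds_zero_of_lt_one (by positivity)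
        (by rw [inv_lt_one_iff₀]; right; exact hr)
    have h2 : Tendsto (fun n : ℕ => (1 - 1 / r ^ n) / (r - 1)) atTop
        (nhds ((1 - 0) / (r - 1))) :=
      ((tendsto_const_nhds.sub h1)).div_const _
    rw [sub_zero] at h2
    apply h2.congr
    intro n
    rw [hgeom n, div_div, mul_comm (r - 1) (r ^ n), ← div_div]
    congr 1
    rw [sub_div, div_self (hrne n)]
  have := havg.mul hratio
  have heq : L * (1 / (r - 1)) = L / (r - 1) := by ring
  rw [heq] at this
  apply this.congr'
  filter_upwards [Ici_mem_atTop 1] with n hn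
  have hGn := (hGpos n hn).ne'
  field_simp

/-- Toeplitz-type consistency of the Harris estimator: if `m0 > 1` and
`N_n m0^{-n} → W` a.s. with `W > 0` on `Ω∞`, then on `Ω∞`,
`m̂_n = (∑_{k=1}^n N_k)/(∑_{k=1}^n N_{k-1}) → m0` a.s. -/
theorem stmt_16 {Ω : Type*} [MeasurableSpace Ω] (μ : Measure Ω) [IsProbabilityMeasure μ]
    (N : ℕ → Ω → ℕ) (m0 : ℝ) (hm0 : 1 < m0) (W : Ω → ℝ) (Ωinf : Set Ω)
    (hconv : ∀ᵐ ω ∂μ, Tendsto (fun n => (N n ω : ℝ) / m0 ^ n) atTop (nhds (W ω)))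
    (hW : ∀ ω ∈ Ωinf, 0 < W ω) :
    ∀ᵐ ω ∂μ, ω ∈ Ωinf →
      Tendsto (fun n => (∑ k ∈ Finset.Icc 1 n, (N k ω : ℝ))
          / (∑ k ∈ Finset.Icc 1 n, (N (k - 1) ω : ℝ))) atTop (nhds m0) := by
  filter_upwards [hconv] with ω hω hmem
  set r := m0 with hrdef
  have hr0 : (0 : ℝ) < r := lt_trans one_pos hm0
  have hrne : ∀ i : ℕ, (r : ℝ) ^ i ≠ 0 := fun i => (pow_pos hr0 i).ne'
  set L := W ω with hLdef
  have hL : 0 < L := hW ω hmem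
  set a : ℕ → ℝ := fun k => (N k ω : ℝ) with ha
  have hc : Tendsto (fun n => a n / r ^ n) atTop (nhds L) := hω
  -- range-sum limit
  have hnum : Tendsto (fun n => (∑ i ∈ Finset.range n, a i) / r ^ n) atTop
      (nhds (L / (r - 1))) := by
    have := toeplitz_geom hm0 hc
    apply this.congr
    intro n
    congr 1
    apply Finset.sum_congr rfl
    intro i _
    field_simp
  -- rewrite Icc sums
  have hS : ∀ n, ∑ k ∈ Finset.Icc 1 n, a k = (∑ i ∈ Finset.range (n + 1), a i) - a 0 := by
    intro n
    induction n with
    | zero => simp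
    | succ n ih =>
      rw [Finset.sum_Icc_succ_top (by omega), ih, Finset.sum_range_succ a (n + 1)]
      ring
  have hT : ∀ n, ∑ k ∈ Finset.Icc 1 n, a (k - 1) = ∑ i ∈ Finset.range n, a i := by
    intro n
    induction n with
    | zero => simp
    | succ n ih =>
      rw [Finset.sum_Icc_succ_top (by omega), ih, Finset.sum_range_succ]
      simp
  -- numerator limit
  have hnumIcc : Tendsto (fun n => (∑ k ∈ Finset.Icc 1 n, a k) / r ^ n) atTop
      (nhds (L * r / (r - 1))) := by
    have h1 : Tendsto (fun n => (∑ i ∈ Finset.range (n + 1), a i) / r ^ (n + 1)) atTop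
        (nhds (L / (r - 1))) := hnum.comp (tendsto_add_atTop_nat 1)
    have h2 : Tendsto (fun n => (∑ i ∈ Finset.range (n + 1), a i) / r ^ (n + 1) * r) atTop
        (nhds (L / (r - 1) * r)) := h1.mul_const r
    have h3 : Tendsto (fun n : ℕ => a 0 / r ^ n) atTop (nhds 0) := by
      have : Tendsto (fun n : ℕ => a 0 * (r⁻¹) ^ n) atTop (nhds (a 0 * 0)) :=
        tendsto_const_nhds.mul (tendsto_pow_atTop_nhds_zero_of_lt_one (by positivity)
          (by rw [inv_lt_one_iff₀]; right; exact hm0))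
      rw [mul_zero] at this
      exact this.congr fun n => by rw [div_eq_mul_inv, inv_pow]
    have h4 := h2.sub h3
    rw [show L / (r - 1) * r - 0 = L * r / (r - 1) by ring] at h4
    apply h4.congr
    intro n
    rw [hS n, sub_div]
    congr 1
    rw [pow_succ]
    field_simp
  -- denominator limit
  have hdenIcc : Tendsto (fun n => (∑ k ∈ Finset.Icc 1 n, a (k - 1)) / r ^ n) atTop
      (nhds (L / (r - 1))) := by
    apply hnum.congr
    intro n
    rw [hT n]
  have hr1 : r - 1 ≠ 0 := by linarith
  have hne : L / (r - 1) ≠ 0 := div_ne_zero hL.ne' hr1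
  have hdiv := hnumIcc.div hdenIcc hne
  have hval : L * r / (r - 1) / (L / (r - 1)) = r := by
    field_simp
  rw [hval] at hdiv
  apply hdiv.congr
  intro n
  simp only [Pi.div_apply, ha]
  rw [div_div_div_comm, div_self (hrne n), div_one]
end
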